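/- Let μ be a probability measure on ℤⁿ, let ξ₁,…,ξ_d ∈ 𝕋ⁿ and θ₁,…,θ_d ∈ ℝ/ℤ, and assume there exist κ₁,…,κ_d ∈ [0,1] such that E_{x∼μ} cos(2π(⟨ξ_j,x⟩ − θ_j)) ≥ 1 − κ_j for every 1 ≤ j ≤ d. Then for every ε₁,…,ε_d ∈ {−1,0,1}, writing T := {j ∈ [d] : ε_j ≠ 0}, m := |T|, ξ := ∑_{j=1}^d ε_jξ_j and θ := ∑_{j=1}^d ε_jθ_j, one has E_{x∼μ} cos(2π(⟨ξ,x⟩ − θ)) ≥ 1 − m·∑_{j∈T} κ_j. -/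

import Mathlib

open scoped BigOperators

noncomputable section

/-- Euclidean norm of a real vector. -/
def l2 {m : ℕ} (x : Fin m → ℝ) : ℝ := Real.sqrt (∑ i, x i ^ 2)

/-- Euclidean norm of an integer vector. -/
def l2Z {m : ℕ} (x : Fin m → ℤ) : ℝ := l2 (fun i => (x i : ℝ))

/-- The torus norm: distance from a representative `ζ` of a point of
`𝕋ⁿ = (ℝ/ℤ)ⁿ` to the nearest point of the integer lattice `ℤⁿ`. -/
def tnorm {m : ℕ} (ζ : Fin m → ℝ) : ℝ := ⨅ z : Fin m → ℤ, l2 (fun i => ζ i - z i)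

/-- The discrete Gaussian probability mass function of radius `R` on `ℤⁿ`:
`γ_R(x) = exp(-π‖x‖²/R²) / ∑_y exp(-π‖y‖²/R²)`. -/
def dgauss (n : ℕ) (R : ℝ) (x : Fin n → ℤ) : ℝ :=
  Real.exp (-Real.pi * l2Z x ^ 2 / R ^ 2) /
    ∑' y : Fin n → ℤ, Real.exp (-Real.pi * l2Z y ^ 2 / R ^ 2)

/-- `μ` is a probability mass function on `ℤⁿ`. -/
def IsPMF {n : ℕ} (μ : (Fin n → ℤ) → ℝ) : Prop := (∀ x, 0 ≤ μ x) ∧ HasSum μ 1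

/-- The pairing `⟨ζ, x⟩ = ∑ i, ζ i * x i` of a torus representative and a lattice point. -/
def pair {n : ℕ} (ζ : Fin n → ℝ) (x : Fin n → ℤ) : ℝ := ∑ i, ζ i * (x i : ℝ)

/-- The Fourier transform `μ̂(ζ) = ∑ₓ μ(x)·exp(-2πi⟨ζ,x⟩)` of `μ : ℤⁿ → ℝ`,
evaluated at a representative of a torus point. -/
def ft {n : ℕ} (μ : (Fin n → ℤ) → ℝ) (ζ : Fin n → ℝ) : ℂ :=
  ∑' x : Fin n → ℤ, (μ x : ℂ) * Complex.exp (-(2 * (Real.pi : ℂ) * Complex.I) * (pair ζ x : ℂ))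

/-- **Signed sums of phases** (Fact 4.9): if each `⟨ξⱼ,·⟩` is concentrated around the
phase `θⱼ` up to defect `κⱼ`, then any `{-1,0,1}`-signed combination `ξ = ∑ εⱼξⱼ`
is concentrated around `θ = ∑ εⱼθⱼ` with defect at most `m·∑_{j∈T} κⱼ`,
where `T = {j : εⱼ ≠ 0}` and `m = |T|`. -/
lemma norm_one_sub_exp_sq (a : ℝ) :
    ‖(1 : ℂ) - Complex.exp ((a : ℂ) * Complex.I)‖ ^ 2 = 2 * (1 - Real.cos a) := by
  rw [Complex.exp_mul_I]
  rw [Complex.sq_norm, Complex.normSq_apply]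
  simp [Complex.cos_ofReal_re, Complex.sin_ofReal_re]
  nlinarith [Real.sin_sq_add_cos_sq a]

lemma norm_one_sub_exp_sum_le {ι : Type*} (S : Finset ι) (a : ι → ℝ) :
    ‖(1 : ℂ) - Complex.exp (((∑ j ∈ S, a j : ℝ) : ℂ) * Complex.I)‖ ≤
      ∑ j ∈ S, ‖(1 : ℂ) - Complex.exp ((a j : ℂ) * Complex.I)‖ := by
  classical
  induction S using Finset.induction_on with
  | empty => simp
  | insert _ _ hx ih =>
    rename_i x S
    rw [Finset.sum_insert hx, Finset.sum_insert hx]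
    have key : (1 : ℂ) - Complex.exp (((a x + ∑ j ∈ S, a j : ℝ) : ℂ) * Complex.I)
        = ((1 : ℂ) - Complex.exp ((a x : ℂ) * Complex.I))
          + Complex.exp ((a x : ℂ) * Complex.I) *
            ((1 : ℂ) - Complex.exp (((∑ j ∈ S, a j : ℝ) : ℂ) * Complex.I)) := by
      push_cast
      rw [add_mul, Complex.exp_add]
      ring
    rw [key]
    calc _ ≤ ‖(1 : ℂ) - Complex.exp ((a x : ℂ) * Complex.I)‖ +
          ‖Complex.exp ((a x : ℂ) * Complex.I) *
            ((1 : ℂ) - Complex.exp (((∑ j ∈ S, a j : ℝ) : ℂ) * Complex.I))‖ := norm_add_le _ _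
      _ ≤ _ := by
          rw [norm_mul, Complex.norm_exp_ofReal_mul_I, one_mul]
          exact add_le_add_right ih _

lemma one_sub_cos_sum_le {ι : Type*} (S : Finset ι) (a : ι → ℝ) :
    1 - Real.cos (∑ j ∈ S, a j) ≤ (S.card : ℝ) * ∑ j ∈ S, (1 - Real.cos (a j)) := by
  have h1 := norm_one_sub_exp_sum_le S a
  have h2 : (∑ j ∈ S, ‖(1 : ℂ) - Complex.exp ((a j : ℂ) * Complex.I)‖) ^ 2 ≤
      (S.card : ℝ) * ∑ j ∈ S, ‖(1 : ℂ) - Complex.exp ((a j : ℂ) * Complex.I)‖ ^ 2 := by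
    have := Finset.sum_mul_sq_le_sq_mul_sq S (fun _ => (1:ℝ))
      (fun j => ‖(1 : ℂ) - Complex.exp ((a j : ℂ) * Complex.I)‖)
    simpa using this
  have h3 : ‖(1 : ℂ) - Complex.exp (((∑ j ∈ S, a j : ℝ) : ℂ) * Complex.I)‖ ^ 2 ≤
      (S.card : ℝ) * ∑ j ∈ S, ‖(1 : ℂ) - Complex.exp ((a j : ℂ) * Complex.I)‖ ^ 2 := by
    refine le_trans (pow_le_pow_left₀ (norm_nonneg _) h1 2) h2
  rw [norm_one_sub_exp_sq] at h3
  have h4 : ∀ j ∈ S, ‖(1 : ℂ) - Complex.exp ((a j : ℂ) * Complex.I)‖ ^ 2 = 2 * (1 - Real.cos (a j)) :=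
    fun j _ => norm_one_sub_exp_sq (a j)
  rw [Finset.sum_congr rfl h4, Finset.mul_sum] at h3
  rw [Finset.mul_sum]
  have h5 : ∑ i ∈ S, (S.card : ℝ) * (2 * (1 - Real.cos (a i))) =
      2 * ∑ i ∈ S, (S.card : ℝ) * (1 - Real.cos (a i)) := by
    rw [Finset.mul_sum]; exact Finset.sum_congr rfl (fun i _ => by ring)
  linarith [h3, h5.symm.le]

theorem signed_sum_phase
    (n d : ℕ) (μ : (Fin n → ℤ) → ℝ) (hμ : IsPMF μ)
    (ξ : Fin d → Fin n → ℝ) (θ : Fin d → ℝ) (κ : Fin d → ℝ)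
    (hκ : ∀ j, κ j ∈ Set.Icc (0:ℝ) 1)
    (hphase : ∀ j, 1 - κ j ≤
      ∑' x : Fin n → ℤ, μ x * Real.cos (2 * Real.pi * (pair (ξ j) x - θ j)))
    (ε : Fin d → ℤ) (hε : ∀ j, ε j = -1 ∨ ε j = 0 ∨ ε j = 1) :
    1 - ((Finset.univ.filter (fun j : Fin d => ε j ≠ 0)).card : ℝ) *
        (∑ j ∈ Finset.univ.filter (fun j : Fin d => ε j ≠ 0), κ j)
      ≤ ∑' x : Fin n → ℤ, μ x *
          Real.cos (2 * Real.pi *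
            (pair (fun i => ∑ j, (ε j : ℝ) * ξ j i) x - ∑ j, (ε j : ℝ) * θ j)) := by
  classical
  obtain ⟨hμ0, hμ1⟩ := hμ
  set T := Finset.univ.filter (fun j : Fin d => ε j ≠ 0) with hT
  set m : ℝ := (T.card : ℝ) with hm
  set c : Fin d → (Fin n → ℤ) → ℝ :=
    fun j x => Real.cos (2 * Real.pi * (pair (ξ j) x - θ j)) with hc
  set C : (Fin n → ℤ) → ℝ := fun x =>
    Real.cos (2 * Real.pi *
      (pair (fun i => ∑ j, (ε j : ℝ) * ξ j i) x - ∑ j, (ε j : ℝ) * θ j)) with hCdef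
  -- pointwise bound
  have hpt : ∀ x, 1 - C x ≤ m * ∑ j ∈ T, (1 - c j x) := by
    intro x
    set a : Fin d → ℝ := fun j => (ε j : ℝ) * (2 * Real.pi * (pair (ξ j) x - θ j)) with haa
    have hA : 2 * Real.pi *
        (pair (fun i => ∑ j, (ε j : ℝ) * ξ j i) x - ∑ j, (ε j : ℝ) * θ j) = ∑ j ∈ T, a j := by
      have h0 : pair (fun i => ∑ j, (ε j : ℝ) * ξ j i) x = ∑ j, (ε j : ℝ) * pair (ξ j) x := by
        simp only [pair, Finset.sum_mul, Finset.mul_sum]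
        rw [Finset.sum_comm]
        exact Finset.sum_congr rfl fun j _ => Finset.sum_congr rfl fun i _ => by ring
      have h1 : ∑ j ∈ T, a j = ∑ j, a j := by
        refine Finset.sum_filter_of_ne fun j _ hj => ?_
        intro h; apply hj; simp [haa, h]
      rw [h1, h0, ← Finset.sum_sub_distrib, Finset.mul_sum]
      exact Finset.sum_congr rfl fun j _ => by simp only [haa]; ring
    have hB := one_sub_cos_sum_le T a
    simp only [hCdef]
    rw [hA]
    refine hB.trans (le_of_eq ?_)
    rw [hm]
    congr 1
    refine Finset.sum_congr rfl fun j hj => ?_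
    have hj' : ε j ≠ 0 := by simpa [hT] using hj
    rcases hε j with h | h | h
    · simp [hc, haa, h]
    · exact absurd h hj'
    · simp [hc, haa, h]
  -- summability facts
  have hμs : Summable μ := hμ1.summable
  have hbd : ∀ f : (Fin n → ℤ) → ℝ, (∀ x, |f x| ≤ 1) → Summable (fun x => μ x * f x) := by
    intro f hf
    refine Summable.of_norm_bounded hμs fun x => ?_
    rw [Real.norm_eq_abs, abs_mul, abs_of_nonneg (hμ0 x)]
    exact mul_le_of_le_one_right (hμ0 x) (hf x)
  have hCsum : Summable (fun x => μ x * C x) := hbd C fun x => Real.abs_cos_le_one _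
  have hcsum : ∀ j, Summable (fun x => μ x * c j x) :=
    fun j => hbd (c j) fun x => Real.abs_cos_le_one _
  have h1mc : ∀ j, Summable (fun x => μ x * (1 - c j x)) := by
    intro j
    have : (fun x => μ x * (1 - c j x)) = fun x => μ x - μ x * c j x := by
      funext x; ring
    rw [this]; exact hμs.sub (hcsum j)
  have h1mC : Summable (fun x => μ x * (1 - C x)) := by
    have : (fun x => μ x * (1 - C x)) = fun x => μ x - μ x * C x := by
      funext x; ring
    rw [this]; exact hμs.sub hCsum
  have hRHSsum : Summable (fun x => m * ∑ j ∈ T, μ x * (1 - c j x)) :=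
    (summable_sum fun j (_ : j ∈ T) => h1mc j).mul_left m
  -- main computation
  have key1 : ∑' x, μ x * (1 - C x) = 1 - ∑' x, μ x * C x := by
    have e : (fun x => μ x * (1 - C x)) = fun x => μ x - μ x * C x := by
      funext x; ring
    rw [e, Summable.tsum_sub hμs hCsum, hμ1.tsum_eq]
  have key2 : ∑' x, μ x * (1 - C x) ≤ ∑' x, m * ∑ j ∈ T, μ x * (1 - c j x) := by
    refine Summable.tsum_le_tsum (fun x => ?_) h1mC hRHSsum
    calc μ x * (1 - C x) ≤ μ x * (m * ∑ j ∈ T, (1 - c j x)) :=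
          mul_le_mul_of_nonneg_left (hpt x) (hμ0 x)
      _ = m * ∑ j ∈ T, μ x * (1 - c j x) := by
          simp only [Finset.mul_sum]
          exact Finset.sum_congr rfl fun j _ => by ring
  have key3 : ∑' x, m * ∑ j ∈ T, μ x * (1 - c j x)
      = m * ∑ j ∈ T, ∑' x, μ x * (1 - c j x) := by
    rw [tsum_mul_left, Summable.tsum_finsetSum fun j _ => h1mc j]
  have key4 : ∀ j ∈ T, ∑' x, μ x * (1 - c j x) ≤ κ j := by
    intro j _
    have e : ∑' x, μ x * (1 - c j x) = 1 - ∑' x, μ x * c j x := by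
      have e2 : (fun x => μ x * (1 - c j x)) = fun x => μ x - μ x * c j x := by
        funext x; ring
      rw [e2, Summable.tsum_sub hμs (hcsum j), hμ1.tsum_eq]
    rw [e]
    linarith [hphase j]
  have key5 : m * ∑ j ∈ T, ∑' x, μ x * (1 - c j x) ≤ m * ∑ j ∈ T, κ j := by
    apply mul_le_mul_of_nonneg_left (Finset.sum_le_sum key4)
    exact Nat.cast_nonneg _
  linarith [key1, key2, key3.le, key5, key3.ge]
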